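/- Let p > 1 and t = 1/(p-1). For every β > 1 there exists a constant C > 0 (depending on t and β) such that for every sequence {a_j}_{j≥1} of nonnegative real numbers, (Σ_{j=1}^∞ a_j)^t ≤ C Σ_{j=1}^∞ β^j a_j^t. -/

import Mathlib

open ENNReal

/-- Dyda's inequality [Dyd06, Lemma 3(b)] with `t = 1/(p-1)`: for every `β > 1` there
is `C > 0` such that for every sequence `{a_j}_{j ≥ 1}` of nonnegative (extended) reals,
`(Σ_{j=1}^∞ a_j)^t ≤ C Σ_{j=1}^∞ β^j a_j^t`. -/
theorem stmt_5 (p t β : ℝ) (hp : 1 < p) (ht : t = 1 / (p - 1)) (hβ : 1 < β) :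
    ∃ C : ℝ, 0 < C ∧ ∀ a : ℕ → ℝ≥0∞,
      (∑' j : ℕ, a (j + 1)) ^ t ≤
        ENNReal.ofReal C * ∑' j : ℕ, ENNReal.ofReal β ^ (j + 1) * a (j + 1) ^ t := by
  have hβ0 : (0:ℝ) < β := lt_trans one_pos hβ
  have ht0 : 0 < t := by
    rw [ht]; exact div_pos one_pos (by linarith)
  set r : ℝ := β ^ (-1 / t) with hr
  have hr0 : 0 < r := Real.rpow_pos_of_pos hβ0 _
  have hr1 : r < 1 := Real.rpow_lt_one_of_one_lt_of_neg hβ (by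
    rw [neg_div]; exact neg_neg_of_pos (div_pos one_pos ht0))
  have hsum : Summable (fun j : ℕ => r ^ (j + 1)) := by
    have := (summable_geometric_of_lt_one hr0.le hr1).mul_left r
    exact this.congr (fun j => by rw [pow_succ, mul_comm])
  have hCr0 : 0 < ∑' j : ℕ, r ^ (j + 1) :=
    Summable.tsum_pos hsum (fun i => by positivity) 0 (by positivity)
  refine ⟨(∑' j : ℕ, r ^ (j + 1)) ^ t, Real.rpow_pos_of_pos hCr0 t, fun a => ?_⟩
  set S : ℝ≥0∞ := ∑' j : ℕ, ENNReal.ofReal β ^ (j + 1) * a (j + 1) ^ t with hS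
  have hb0 : (ENNReal.ofReal β : ℝ≥0∞) ≠ 0 := by
    simp [ENNReal.ofReal_eq_zero]; linarith
  have hbtop : (ENNReal.ofReal β : ℝ≥0∞) ≠ ⊤ := ENNReal.ofReal_ne_top
  have key : ∀ j : ℕ, a (j + 1) ≤ S ^ (1 / t) * ENNReal.ofReal r ^ (j + 1) := by
    intro j
    have hj : ENNReal.ofReal β ^ (j + 1) * a (j + 1) ^ t ≤ S := ENNReal.le_tsum j
    have h1 : a (j + 1) ^ t ≤ (ENNReal.ofReal β ^ (j + 1))⁻¹ * S := by
      have := mul_le_mul_right hj (ENNReal.ofReal β ^ (j + 1))⁻¹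
      rwa [← mul_assoc, ENNReal.inv_mul_cancel (pow_ne_zero _ hb0)
        (by exact ENNReal.pow_ne_top hbtop), one_mul] at this
    have h2 := ENNReal.rpow_le_rpow h1 (le_of_lt (div_pos one_pos ht0))
    have h3 : (a (j + 1) ^ t) ^ (1 / t) = a (j + 1) := by
      rw [← ENNReal.rpow_mul, mul_one_div, div_self ht0.ne', ENNReal.rpow_one]
    have h4 : ((ENNReal.ofReal β ^ (j + 1))⁻¹) ^ (1 / t)
        = ENNReal.ofReal r ^ (j + 1) := by
      rw [hr, ← ENNReal.ofReal_rpow_of_pos hβ0,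
        ← ENNReal.rpow_natCast (ENNReal.ofReal β) (j + 1),
        ← ENNReal.rpow_neg, ← ENNReal.rpow_mul,
        ← ENNReal.rpow_natCast (ENNReal.ofReal β ^ (-1 / t : ℝ)) (j + 1),
        ← ENNReal.rpow_mul]
      congr 1
      push_cast
      ring
    calc a (j + 1) = (a (j + 1) ^ t) ^ (1 / t) := h3.symm
      _ ≤ ((ENNReal.ofReal β ^ (j + 1))⁻¹ * S) ^ (1 / t) := h2
      _ = S ^ (1 / t) * ENNReal.ofReal r ^ (j + 1) := by
          rw [ENNReal.mul_rpow_of_nonneg _ _ (le_of_lt (div_pos one_pos ht0)),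
            h4, mul_comm]
  calc (∑' j : ℕ, a (j + 1)) ^ t
      ≤ (∑' j : ℕ, S ^ (1 / t) * ENNReal.ofReal r ^ (j + 1)) ^ t :=
        ENNReal.rpow_le_rpow (ENNReal.tsum_le_tsum key) ht0.le
    _ = (S ^ (1 / t) * ∑' j : ℕ, ENNReal.ofReal r ^ (j + 1)) ^ t := by
        rw [ENNReal.tsum_mul_left]
    _ = (S ^ (1 / t) * ENNReal.ofReal (∑' j : ℕ, r ^ (j + 1))) ^ t := by
        congr 1
        rw [ENNReal.ofReal_tsum_of_nonneg (fun j => by positivity) hsum]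
        exact congrArg _ (tsum_congr fun j => by rw [← ENNReal.ofReal_pow hr0.le])
    _ = ENNReal.ofReal ((∑' j : ℕ, r ^ (j + 1)) ^ t) * S := by
        rw [ENNReal.mul_rpow_of_nonneg _ _ ht0.le, ← ENNReal.rpow_mul,
          one_div, inv_mul_cancel₀ ht0.ne', ENNReal.rpow_one,
          ← ENNReal.ofReal_rpow_of_nonneg hCr0.le ht0.le, mul_comm]
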